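/- Let tests t, d satisfy the strict difficulty comparison in the sense that (1−π_t(θ))/(1−π_d(θ)) is increasing in θ with values in (0,1]. Fix acceptance probabilities α, α' ∈ [0,1). If a type θ₀ weakly prefers the pair (d, α') to (t, α), i.e., π_d(θ₀) + α'(1−π_d(θ₀)) ≥ π_t(θ₀) + α(1−π_t(θ₀)), then every type θ > θ₀ also weakly prefers (d, α') to (t, α). (Single-crossing of the selection into the easier test with a more lenient acceptance rule.) -/
import Mathlib


open Set

/-- Single-crossing of selection into the easier test with a more lenient acceptance rule:
if the ratio `(1−πt)/(1−πd)` is increasing with values in `(0,1]`, and a type `θ₀` weakly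
prefers `(d, α')` to `(t, α)`, then every higher type does too. -/
theorem stmt_12 (Θ : Set ℝ) (πt πd : ℝ → ℝ) (α α' : ℝ)
    (hα : α ∈ Ico (0:ℝ) 1) (hα' : α' ∈ Ico (0:ℝ) 1)
    (hrt : ∀ θ ∈ Θ, πt θ ∈ Ioo (0:ℝ) 1)
    (hrd : ∀ θ ∈ Θ, πd θ ∈ Ioo (0:ℝ) 1)
    (hratio_range : ∀ θ ∈ Θ, (1 - πt θ) / (1 - πd θ) ∈ Ioc (0:ℝ) 1)
    (hratio_mono : ∀ θ ∈ Θ, ∀ θ' ∈ Θ, θ' ≤ θ →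
      (1 - πt θ') / (1 - πd θ') ≤ (1 - πt θ) / (1 - πd θ))
    (θ₀ : ℝ) (hθ₀ : θ₀ ∈ Θ)
    (hpref : πd θ₀ + α' * (1 - πd θ₀) ≥ πt θ₀ + α * (1 - πt θ₀)) :
    ∀ θ ∈ Θ, θ₀ < θ → πd θ + α' * (1 - πd θ) ≥ πt θ + α * (1 - πt θ) := by
  intro θ hθ hlt
  have hd0 := (hrd θ₀ hθ₀).2
  have hd := (hrd θ hθ).2
  have hd0' : (0:ℝ) < 1 - πd θ₀ := by linarith
  have hd' : (0:ℝ) < 1 - πd θ := by linarith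
  -- preference at θ₀ as ratio inequality
  have key0 : (1 - α') * (1 - πd θ₀) ≤ (1 - α) * (1 - πt θ₀) := by nlinarith
  have hr0 : (1 - α') / (1 - α) ≤ (1 - πt θ₀) / (1 - πd θ₀) := by
    rw [div_le_div_iff₀ (by linarith [hα.2]) hd0']
    nlinarith [hα.2]
  have hmono := hratio_mono θ hθ θ₀ hθ₀ hlt.le
  have hr : (1 - α') / (1 - α) ≤ (1 - πt θ) / (1 - πd θ) := le_trans hr0 hmono
  have key : (1 - α') * (1 - πd θ) ≤ (1 - α) * (1 - πt θ) := by
    rw [div_le_div_iff₀ (by linarith [hα.2]) hd'] at hr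
    nlinarith [hα.2]
  nlinarith
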